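/- Let r : ℝ → ℝ be C², let F : ℝ → ℝ be continuous, and let x : ℝ → ℝ be differentiable with x'(t) = r(x(t)) for all t ∈ ℝ. Assume r(s) r''(s) + 2 r'(s)² = 2 F(s) r'(s) for all s ∈ ℝ. Then there exist constants c, c' ∈ ℝ such that r(x(t))² = c · ∫₀ᵗ exp(2 ∫₀ˢ F(x(u)) du) ds + c' for all t ∈ ℝ. (This is the full solution formula of the paper's Remark 2 for a mixed Killing vector field r d/dx on the real line, evaluated along an integral curve.) -/

import Mathlib

open Real

private lemma cont_int_hasDerivAt (f : ℝ → ℝ) (hf : Continuous f) (t : ℝ) :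
    HasDerivAt (fun u => ∫ s in (0:ℝ)..u, f s) (f t) t :=
  intervalIntegral.integral_hasDerivAt_right (hf.intervalIntegrable 0 t)
    (hf.stronglyMeasurableAtFilter _ _) hf.continuousAt

/-- the full solution formula of Remark 2: if `r` is C², `F` is continuous,
`x` is an integral curve of `r d/dx` and `r r'' + 2 r'² = 2 F r'` holds on ℝ, then
`r(x(t))² = c ∫₀ᵗ exp(2 ∫₀ˢ F(x(u)) du) ds + c'` for some constants `c, c'`. -/
theorem mixedKilling_solution_along_integral_curve (r F x : ℝ → ℝ)
    (hr : ContDiff ℝ 2 r) (hF : Continuous F)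
    (hx : Differentiable ℝ x) (hode : ∀ t, deriv x t = r (x t))
    (hmk : ∀ s, r s * deriv (deriv r) s + 2 * (deriv r s) ^ 2 = 2 * F s * deriv r s) :
    ∃ c c' : ℝ, ∀ t,
      (r (x t)) ^ 2 = c * (∫ s in (0 : ℝ)..t, exp (2 * ∫ u in (0 : ℝ)..s, F (x u))) + c' := by
  have hr' := contDiff_succ_iff_deriv.mp (show ContDiff ℝ ((1:ℕ)+1) r by exact_mod_cast hr)
  have hrd : Differentiable ℝ r := hr'.1
  have hrd' : Differentiable ℝ (deriv r) := hr'.2.2.differentiable (by simp)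
  -- integral curve
  have hxd : ∀ t, HasDerivAt x (r (x t)) t := fun t => by
    simpa [hode t] using (hx t).hasDerivAt
  -- G t = ∫₀ᵗ F(x u) du
  set G : ℝ → ℝ := fun t => ∫ u in (0:ℝ)..t, F (x u) with hG
  have hFx : Continuous fun u => F (x u) := hF.comp hx.continuous
  have hGd : ∀ t, HasDerivAt G (F (x t)) t := cont_int_hasDerivAt _ hFx
  -- E t = exp (2 * G t)
  set E : ℝ → ℝ := fun t => exp (2 * G t) with hE
  have hEd : ∀ t, HasDerivAt E (2 * F (x t) * E t) t := fun t => by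
    have := (((hGd t).const_mul 2).exp)
    simpa [hE, mul_comm] using this
  have hGdiff : Differentiable ℝ G := fun t => (hGd t).differentiableAt
  have hEcont : Continuous E :=
    Real.continuous_exp.comp (continuous_const.mul hGdiff.continuous)
  -- w t = y'(t) = 2 r(x t)^2 * r'(x t)
  set w : ℝ → ℝ := fun t => 2 * (r (x t))^2 * deriv r (x t) with hw
  -- y has derivative w
  have hyd : ∀ t, HasDerivAt (fun t => (r (x t))^2) (w t) t := fun t => by
    have hrx : HasDerivAt (fun t => r (x t)) (deriv r (x t) * r (x t)) t :=
      ((hrd (x t)).hasDerivAt).comp t (hxd t)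
    have := hrx.fun_pow 2
    refine this.congr_deriv ?_
    simp [hw]; ring
  -- w has derivative 2 F(x t) * w t
  have hwd : ∀ t, HasDerivAt w (2 * F (x t) * w t) t := fun t => by
    have hrx : HasDerivAt (fun t => r (x t)) (deriv r (x t) * r (x t)) t :=
      ((hrd (x t)).hasDerivAt).comp t (hxd t)
    have hrx' : HasDerivAt (fun t => deriv r (x t)) (deriv (deriv r) (x t) * r (x t)) t :=
      ((hrd' (x t)).hasDerivAt).comp t (hxd t)
    have h1 : HasDerivAt (fun t => 2 * (r (x t))^2)
        (2 * (2 * r (x t) ^ 1 * (deriv r (x t) * r (x t)))) t := (hrx.pow 2).const_mul 2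
    have := h1.fun_mul hrx'
    refine this.congr_deriv ?_
    have key := hmk (x t)
    simp only [hw, pow_one]
    nlinarith [key, sq_nonneg (r (x t))]
  -- w t * exp(-(2 * G t)) is constant
  set D : ℝ → ℝ := fun t => exp (-(2 * G t)) with hD
  have hDd : ∀ t, HasDerivAt D (-(2 * F (x t)) * D t) t := fun t => by
    have := (((hGd t).const_mul 2).neg).exp
    simpa [hD, mul_comm] using this
  have hconst : ∀ t, w t * D t = w 0 * D 0 := by
    intro t
    have : ∀ s, HasDerivAt (fun t => w t * D t) 0 s := fun s => by
      have := (hwd s).fun_mul (hDd s)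
      refine this.congr_deriv ?_; ring
    have := is_const_of_deriv_eq_zero (fun s => (this s).differentiableAt)
      (fun s => (this s).deriv) t 0
    exact this
  have hED : ∀ t, D t * E t = 1 := fun t => by
    simp [hD, hE, ← Real.exp_add]
  have hwE : ∀ t, w t = w 0 * E t := fun t => by
    have h := hconst t
    have hD0 : D 0 = exp (-(2 * G 0)) := rfl
    have : w t * D t * E t = w 0 * D 0 * E t := by rw [h]
    rw [mul_assoc, hED t] at this
    simp only [hG, intervalIntegral.integral_same] at hD0
    simp [hD0] at this
    simpa using this
  -- conclude
  refine ⟨w 0, (r (x 0))^2, fun t => ?_⟩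
  set Y : ℝ → ℝ := fun t => w 0 * (∫ s in (0:ℝ)..t, E s) + (r (x 0))^2 with hY
  have hYd : ∀ t, HasDerivAt Y (w 0 * E t) t := fun t =>
    ((cont_int_hasDerivAt E hEcont t).const_mul (w 0)).add_const _
  have hdiff : ∀ t, (r (x t))^2 - Y t = (r (x 0))^2 - Y 0 := by
    intro t
    have hz : ∀ s, HasDerivAt (fun t => (r (x t))^2 - Y t) 0 s := fun s => by
      have := (hyd s).fun_sub (hYd s)
      rw [hwE s] at this
      simpa using this
    exact is_const_of_deriv_eq_zero (fun s => (hz s).differentiableAt)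
      (fun s => (hz s).deriv) t 0
  have := hdiff t
  have hY0 : Y 0 = (r (x 0))^2 := by simp [hY]
  rw [hY0] at this
  have : (r (x t))^2 = Y t := by linarith
  simpa [hY, hE, hG] using this
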